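/- (Cassini's identity for bicomplex Pell numbers) For every integer n, BP(n−1)·BP(n+1) − BP(n)² = 12·(−1)^n·(j + ij). -/

import Mathlib

open scoped TensorProduct

noncomputable def bi : ℂ ⊗[ℝ] ℂ := Complex.I ⊗ₜ[ℝ] 1
noncomputable def bj : ℂ ⊗[ℝ] ℂ := (1 : ℂ) ⊗ₜ[ℝ] Complex.I
noncomputable def bij : ℂ ⊗[ℝ] ℂ := Complex.I ⊗ₜ[ℝ] Complex.I

/-- The bicomplex Pell number `BP n = P n + P (n+1) i + P (n+2) j + P (n+3) ij`. -/
noncomputable def BP (P : ℤ → ℤ) (n : ℤ) : ℂ ⊗[ℝ] ℂ :=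
  (P n : ℝ) • (1 : ℂ ⊗[ℝ] ℂ) + (P (n + 1) : ℝ) • bi + (P (n + 2) : ℝ) • bj +
    (P (n + 3) : ℝ) • bij

set_option maxHeartbeats 1600000 in
theorem bicomplexPell_cassini (P : ℤ → ℤ)
    (hP : ∀ n : ℤ, P (n + 2) = 2 * P (n + 1) + P n) (hP0 : P 0 = 0) (hP1 : P 1 = 1)
    (n : ℤ) :
    BP P (n - 1) * BP P (n + 1) - BP P n ^ 2 =
      (12 * (-1 : ℝ) ^ n) • (bj + bij) := by
  -- Cassini identity for Pell numbers
  have key : ∀ m : ℤ, (P (m + 1) : ℝ) ^ 2 - 2 * (P m) * (P (m + 1)) - (P m : ℝ) ^ 2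
      = (-1 : ℝ) ^ m := by
    intro m
    induction m using Int.induction_on with
    | zero => norm_num [hP0, hP1]
    | succ k ih =>
      have hr := hP k
      have e : ((-1 : ℝ)) ^ ((k : ℤ) + 1) = (-1 : ℝ) ^ (k : ℤ) * (-1) :=
        zpow_add_one₀ (by norm_num) _
      rw [show (k : ℤ) + 1 + 1 = k + 2 by ring, e, ← ih]
      push_cast [hr]
      ring
    | pred k ih =>
      have hr := hP (-(k : ℤ) - 1)
      rw [show -(k : ℤ) - 1 + 2 = -k + 1 by ring] at hr
      have e : ((-1 : ℝ)) ^ (-(k : ℤ) - 1) = (-1 : ℝ) ^ (-(k : ℤ)) * (-1)⁻¹ :=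
        zpow_sub_one₀ (by norm_num) _
      rw [show -(k : ℤ) - 1 + 1 = -k by ring, e, ← ih]
      have hr' : (P (-(k : ℤ) - 1) : ℝ) = P (-(k : ℤ) + 1) - 2 * P (-(k : ℤ)) := by
        push_cast [hr]; ring
      rw [hr']
      have h1 : (P (-(k : ℤ) + 1) : ℝ) = P (-(k : ℤ) + 1) := rfl
      ring
  -- algebra relations
  have one_def : (1 : ℂ ⊗[ℝ] ℂ) = (1 : ℂ) ⊗ₜ[ℝ] (1 : ℂ) := Algebra.TensorProduct.one_def
  have hii : bi * bi = -1 := by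
    rw [bi, Algebra.TensorProduct.tmul_mul_tmul, Complex.I_mul_I, one_mul, one_def]
    rw [← TensorProduct.neg_tmul]
  have hjj : bj * bj = -1 := by
    rw [bj, Algebra.TensorProduct.tmul_mul_tmul, Complex.I_mul_I, one_mul, one_def]
    rw [← TensorProduct.tmul_neg]
  have hk : bij = bi * bj := by
    rw [bi, bj, bij, Algebra.TensorProduct.tmul_mul_tmul, one_mul, mul_one]
  -- coefficients
  set a : ℝ := (P n : ℝ) with ha
  set b : ℝ := (P (n + 1) : ℝ) with hb
  have h2 : (P (n + 2) : ℝ) = 2 * b + a := by push_cast [hP n]; ring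
  have h3 : (P (n + 3) : ℝ) = 5 * b + 2 * a := by
    have := hP (n + 1)
    rw [show n + 1 + 2 = n + 3 by ring, show n + 1 + 1 = n + 2 by ring] at this
    push_cast [this, hP n]; ring
  have h4 : (P (n + 4) : ℝ) = 12 * b + 5 * a := by
    have := hP (n + 2)
    rw [show n + 2 + 2 = n + 4 by ring, show n + 2 + 1 = n + 3 by ring] at this
    push_cast [this]; rw [h3, h2]; ring
  have hm1 : (P (n - 1) : ℝ) = b - 2 * a := by
    have h := hP (n - 1)
    rw [show n - 1 + 2 = n + 1 by ring, show n - 1 + 1 = n by ring] at h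
    have hz : P (n - 1) = P (n + 1) - 2 * P n := by omega
    rw [hb, ha]; exact_mod_cast hz
  rw [BP, BP, BP]
  rw [show n - 1 + 1 = n by ring, show n - 1 + 2 = n + 1 by ring,
    show n - 1 + 3 = n + 2 by ring, show n + 1 + 1 = n + 2 by ring,
    show n + 1 + 2 = n + 3 by ring, show n + 1 + 3 = n + 4 by ring]
  rw [hm1, h2, h3, h4, ← ha, ← hb]
  -- convert smul to algebraMap multiplication
  set φ := algebraMap ℝ (ℂ ⊗[ℝ] ℂ) with hφ
  have keyA : φ b ^ 2 - 2 * φ a * φ b - φ a ^ 2 = φ ((-1 : ℝ) ^ n) := by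
    have := congrArg φ (key n)
    simpa only [map_sub, map_mul, map_pow, map_ofNat] using this
  have smul_def' : ∀ (r : ℝ) (x : ℂ ⊗[ℝ] ℂ), r • x = φ r * x := fun r x =>
    Algebra.smul_def r x
  simp only [smul_def', map_sub, map_add, map_mul, map_ofNat]
  set A := φ a
  set B := φ b
  set E := φ ((-1 : ℝ) ^ n)
  linear_combination
    (-12*E + 14*B^2 - B^2*bij + 2*B^2*bj - 6*B^2*bi - B^2*bi*bj - 28*A*B + 2*A*B*bij
      - 4*A*B*bj + 12*A*B*bi + 2*A*B*bi*bj - 14*A^2 + A^2*bij - 2*A^2*bj + 6*A^2*bi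
      + A^2*bi*bj) * hk
    + (-B^2 - 6*B^2*bj - B^2*bj^2 + 2*A*B + 12*A*B*bj + 2*A*B*bj^2 + A^2 + 6*A^2*bj
      + A^2*bj^2) * hii
    + (2*B^2 + 2*B^2*bi - 4*A*B - 4*A*B*bi - 2*A^2 - 2*A^2*bi) * hjj
    + (12*(bj + bi*bj)) * keyA
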